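/- Let P be a k-plex containing a designated vertex v_i, with |P| ≥ q, and suppose u_1, u_2 ∈ P are distinct vertices both non-adjacent to v_i (u_1, u_2 ≠ v_i) and non-adjacent to each other. Then |N_C(u_1) ∩ N_C(u_2)| ≥ q - k - 2·max{k-3, 0}, where C = N_G(v_i) ∩ P. -/

import Mathlib

open Finset

variable {V : Type*} [Fintype V] [DecidableEq V]

/-- A set `P` of vertices is a `k`-plex in `G` if every `u ∈ P` has degree at least
`|P| - k` in the induced subgraph `G[P]`, i.e. `|P| ≤ d_P(u) + k`. -/
def SimpleGraph.IsKPlex (G : SimpleGraph V) [DecidableRel G.Adj] (k : ℕ) (P : Finset V) : Prop :=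
  ∀ u ∈ P, P.card ≤ (P.filter (fun x => G.Adj u x)).card + k

lemma aux_nonnbr_bound (G : SimpleGraph V) [DecidableRel G.Adj] (k : ℕ) (P : Finset V)
    (hP : G.IsKPlex k P) (v_i u w : V) (hvi : v_i ∈ P) (hu : u ∈ P) (hw : w ∈ P)
    (huv : u ≠ v_i) (hwv : w ≠ v_i) (huw : u ≠ w)
    (hau : ¬ G.Adj u v_i) (hawv : ¬ G.Adj w v_i) (haw : ¬ G.Adj u w) :
    ((G.neighborFinset v_i ∩ P).filter (fun x => ¬ G.Adj u x)).card + 3 ≤ k := by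
  classical
  set S := (G.neighborFinset v_i ∩ P).filter (fun x => ¬ G.Adj u x) with hS
  have hmemS : ∀ x, x ∈ S ↔ (G.Adj v_i x ∧ x ∈ P) ∧ ¬ G.Adj u x := by
    intro x; simp [hS, SimpleGraph.mem_neighborFinset]
  have huS : u ∉ S := fun h => hau (((hmemS u).1 h).1.1.symm)
  have hvS : v_i ∉ S := fun h => G.irrefl (((hmemS v_i).1 h).1.1)
  have hwS : w ∉ S := fun h => hawv ((((hmemS w).1 h).1.1).symm)
  have hsub : insert u (insert v_i (insert w S)) ⊆ P.filter (fun x => ¬ G.Adj u x) := by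
    intro x hx
    simp only [Finset.mem_insert] at hx
    rcases hx with rfl | rfl | rfl | hx
    · exact Finset.mem_filter.2 ⟨hu, fun h => G.irrefl h⟩
    · exact Finset.mem_filter.2 ⟨hvi, hau⟩
    · exact Finset.mem_filter.2 ⟨hw, haw⟩
    · rcases (hmemS x).1 hx with ⟨⟨_, hxP⟩, hax⟩
      exact Finset.mem_filter.2 ⟨hxP, hax⟩
  have hcard : (insert u (insert v_i (insert w S))).card = S.card + 3 := by
    rw [Finset.card_insert_of_notMem (by simp [huv, huw, huS]),
        Finset.card_insert_of_notMem (by simp [Ne.symm hwv, hvS]),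
        Finset.card_insert_of_notMem hwS]
  have h1 := Finset.card_le_card hsub
  have h2 := Finset.card_filter_add_card_filter_not (s := P)
    (p := fun x => G.Adj u x)
  have h3 := hP u hu
  omega

theorem pair_prune_two_hop_nonadjacent (G : SimpleGraph V) [DecidableRel G.Adj]
    (k q : ℕ) (hk : 1 ≤ k) (P : Finset V) (v_i : V) (hP : G.IsKPlex k P)
    (hvi : v_i ∈ P) (hq : q ≤ P.card) (u1 u2 : V) (h1 : u1 ∈ P) (h2 : u2 ∈ P)
    (hne : u1 ≠ u2) (hn1 : u1 ≠ v_i) (hn2 : u2 ≠ v_i)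
    (ha1 : ¬ G.Adj u1 v_i) (ha2 : ¬ G.Adj u2 v_i) (h12 : ¬ G.Adj u1 u2) :
    (q : ℤ) - (k : ℤ) - 2 * max ((k : ℤ) - 3) 0 ≤
      (((G.neighborFinset v_i ∩ P).filter
          (fun x => G.Adj u1 x ∧ G.Adj u2 x)).card : ℤ) := by
  classical
  set C := G.neighborFinset v_i ∩ P with hC
  have hS1 := aux_nonnbr_bound G k P hP v_i u1 u2 hvi h1 h2 hn1 hn2 hne ha1 ha2 h12
  have hS2 := aux_nonnbr_bound G k P hP v_i u2 u1 hvi h2 h1 hn2 hn1 hne.symm ha2 ha1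
    (fun h => h12 h.symm)
  rw [← hC] at hS1 hS2
  -- |C| ≥ |P| - k
  have hCeq : P.filter (fun x => G.Adj v_i x) = C := by
    ext x; simp [hC, SimpleGraph.mem_neighborFinset, and_comm]
  have hCbig : P.card ≤ C.card + k := by
    have := hP v_i hvi; rwa [hCeq] at this
  -- C covered by the three pieces
  have hcover : C ⊆ (C.filter (fun x => G.Adj u1 x ∧ G.Adj u2 x)) ∪
      ((C.filter (fun x => ¬ G.Adj u1 x)) ∪ (C.filter (fun x => ¬ G.Adj u2 x))) := by
    intro x hx
    by_cases hx1 : G.Adj u1 x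
    · by_cases hx2 : G.Adj u2 x
      · exact Finset.mem_union.2 (Or.inl (Finset.mem_filter.2 ⟨hx, hx1, hx2⟩))
      · exact Finset.mem_union.2 (Or.inr (Finset.mem_union.2
          (Or.inr (Finset.mem_filter.2 ⟨hx, hx2⟩))))
    · exact Finset.mem_union.2 (Or.inr (Finset.mem_union.2
        (Or.inl (Finset.mem_filter.2 ⟨hx, hx1⟩))))
  have hcard := Finset.card_le_card hcover
  have hcard2 : C.card ≤ (C.filter (fun x => G.Adj u1 x ∧ G.Adj u2 x)).card +
      ((C.filter (fun x => ¬ G.Adj u1 x)).card + (C.filter (fun x => ¬ G.Adj u2 x)).card) := by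
    calc C.card ≤ _ := hcard
    _ ≤ _ := (Finset.card_union_le _ _).trans
        (by gcongr; exact Finset.card_union_le _ _)
  have hk3 : (3 : ℕ) ≤ k := by omega
  rw [max_eq_left (by omega)]
  omega
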